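/- If e is normally distributed with mean 0 and variance σ_e², then for the model u-decomposition with η = Φ^{-1}(F_e(e)) one has η = e/σ_e almost surely; consequently the linear combination δ'x·λ₃ − λ₃ z + λ₃σ_e η = 0 holds a.s. for any λ₃, showing non-identification. -/
import Mathlib


open MeasureTheory ProbabilityTheory Matrix

noncomputable def stdPhi (x : ℝ) : ℝ := ∫ t in Set.Iic x, gaussianPDFReal 0 1 t
noncomputable def stdPhiInv (u : ℝ) : ℝ := sInf {x : ℝ | u ≤ stdPhi x}

lemma stdPhi_strictMono : StrictMono stdPhi := by
  intro a b hab
  have hint := (integrable_gaussianPDFReal 0 1)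
  have h1 : Set.Iic b = Set.Iic a ∪ Set.Ioc a b := (Set.Iic_union_Ioc_eq_Iic hab.le).symm
  have hdisj : Disjoint (Set.Iic a) (Set.Ioc a b) := by
    simp [Set.disjoint_left]
    intro x hx h; linarith
  have : stdPhi b = stdPhi a + ∫ t in Set.Ioc a b, gaussianPDFReal 0 1 t := by
    rw [stdPhi, h1, setIntegral_union hdisj measurableSet_Ioc hint.restrict hint.restrict]
    rfl
  rw [this]
  have hpos : 0 < ∫ t in Set.Ioc a b, gaussianPDFReal 0 1 t := by
    rw [← intervalIntegral.integral_of_le hab.le]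
    apply intervalIntegral.intervalIntegral_pos_of_pos_on hint.intervalIntegrable
    · intro x _; exact gaussianPDFReal_pos 0 1 x one_ne_zero
    · exact hab
  linarith

lemma stdPhiInv_stdPhi (y : ℝ) : stdPhiInv (stdPhi y) = y := by
  have : {x : ℝ | stdPhi y ≤ stdPhi x} = Set.Ici y := by
    ext x; simp [stdPhi_strictMono.le_iff_le]
  rw [stdPhiInv, this, csInf_Ici]

lemma gauss_cdf (σe2 : NNReal) (hσ : 0 < σe2) (t : ℝ) :
    ((gaussianReal 0 σe2) (Set.Iic t)).toReal = stdPhi (t / Real.sqrt (σe2 : ℝ)) := by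
  set σ : ℝ := Real.sqrt (σe2 : ℝ) with hσdef
  have hσpos : 0 < σ := Real.sqrt_pos.mpr (by exact_mod_cast hσ)
  have hsq : σ ^ 2 = (σe2 : ℝ) := Real.sq_sqrt (by positivity)
  have hmap : (gaussianReal 0 1).map (σ * ·) = gaussianReal 0 σe2 := by
    rw [gaussianReal_map_const_mul σ]
    congr 1
    · simp
    · ext; simp [hsq]
  have hpre : (σ * ·) ⁻¹' (Set.Iic t) = Set.Iic (t / σ) := by
    ext u
    simp only [Set.mem_preimage, Set.mem_Iic]
    rw [le_div_iff₀ hσpos, mul_comm]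
  rw [← hmap, Measure.map_apply (measurable_const_mul σ) measurableSet_Iic, hpre,
    gaussianReal_apply_eq_integral _ one_ne_zero, ENNReal.toReal_ofReal
      (setIntegral_nonneg measurableSet_Iic (fun x _ => gaussianPDFReal_nonneg 0 1 x))]
  rfl

/-- If `e ~ N(0, σ_e²)`, then `η = Φ⁻¹(F_e(e)) = e/σ_e` a.s., and consequently, with
`z = δ'x + e`, the linear combination `λ₃·δ'x − λ₃z + λ₃σ_e·η = 0` holds a.s. for any
`λ₃`, showing non-identification. -/
theorem stmt15 {Ω : Type*} [MeasurableSpace Ω] (P : Measure Ω) [IsProbabilityMeasure P]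
    (k : ℕ) (x : Ω → Fin k → ℝ) (hx : Measurable x)
    (e : Ω → ℝ) (he : Measurable e) (hindep : IndepFun e x P)
    (σe2 : NNReal) (hσ : 0 < σe2)
    (hgauss : Measure.map e P = gaussianReal 0 σe2)
    (F : ℝ → ℝ) (hF : ∀ t, F t = (P {ω | e ω ≤ t}).toReal)
    (δ : Fin k → ℝ) (z : Ω → ℝ) (hz : ∀ ω, z ω = δ ⬝ᵥ x ω + e ω)
    (η : Ω → ℝ) (hη : ∀ ω, η ω = stdPhiInv (F (e ω))) :
    (∀ᵐ ω ∂P, η ω = e ω / Real.sqrt (σe2 : ℝ)) ∧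
      ∀ l3 : ℝ, ∀ᵐ ω ∂P,
        l3 * (δ ⬝ᵥ x ω) - l3 * z ω + l3 * Real.sqrt (σe2 : ℝ) * η ω = 0 := by
  have hσpos : (0 : ℝ) < Real.sqrt (σe2 : ℝ) := Real.sqrt_pos.mpr (by exact_mod_cast hσ)
  have hFeq : ∀ t, F t = stdPhi (t / Real.sqrt (σe2 : ℝ)) := by
    intro t
    rw [hF t, ← gauss_cdf σe2 hσ t, ← hgauss,
      Measure.map_apply he measurableSet_Iic]
    rfl
  have hηeq : ∀ ω, η ω = e ω / Real.sqrt (σe2 : ℝ) := fun ω => by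
    rw [hη, hFeq, stdPhiInv_stdPhi]
  refine ⟨ae_of_all _ hηeq, fun l3 => ae_of_all _ fun ω => ?_⟩
  rw [hηeq, hz]
  field_simp
  ring
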